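/- Let V ⊆ P^n be a nonempty equidimensional projective variety of dimension r. Let u_0, …, u_r be blocks of n+1 variables each, and let C ∈ F[u_0, …, u_r] be a polynomial with the property that for every choice of γ_0, …, γ_r ∈ F^{n+1}, the projective linear subspace V(Σ_{j=0}^n γ_{0,j} x_j, …, Σ_{j=0}^n γ_{r,j} x_j) has a point in V if and only if C(γ_0, …, γ_r) = 0. Let φ: F[u_0, …, u_r] → F[v_0, …, v_r] be the ring homomorphism defined by φ(u_{i,j}) = v_i^j. Then φ(C) is a nonzero polynomial in F[v_0, …, v_r]. -/

import Mathlib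

set_option linter.unusedSectionVars false
set_option linter.unusedVariables false
set_option maxHeartbeats 1000000
set_option synthInstance.maxHeartbeats 400000


open MvPolynomial Classical

variable (F : Type) [Field F] [IsAlgClosed F]

/-- The zero set in `ℙ^n` of a homogeneous polynomial in `n+1` variables. -/
def projZeroSet (n : ℕ) (f : MvPolynomial (Fin (n + 1)) F) :
    Set (Projectivization F (Fin (n + 1) → F)) :=
  {x | MvPolynomial.eval x.rep f = 0}

/-- A projective variety in `ℙ^n`: the common zero set of a family of
homogeneous polynomials. -/
def IsProjVariety (n : ℕ) (V : Set (Projectivization F (Fin (n + 1) → F))) : Prop :=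
  ∃ S : Set (MvPolynomial (Fin (n + 1)) F),
    (∀ f ∈ S, ∃ m, f.IsHomogeneous m) ∧ V = ⋂ f ∈ S, projZeroSet F n f

/-- An irreducible projective variety. -/
def IsIrredProjVariety (n : ℕ) (V : Set (Projectivization F (Fin (n + 1) → F))) : Prop :=
  IsProjVariety F n V ∧ V.Nonempty ∧
    ∀ A B : Set (Projectivization F (Fin (n + 1) → F)),
      IsProjVariety F n A → IsProjVariety F n B → V ⊆ A ∪ B → V ⊆ A ∨ V ⊆ B

/-- `W` is an irreducible component of `V`. -/
def IsProjIrredComponent (n : ℕ) (W V : Set (Projectivization F (Fin (n + 1) → F))) : Prop :=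
  IsIrredProjVariety F n W ∧ W ⊆ V ∧
    ∀ W', IsIrredProjVariety F n W' → W ⊆ W' → W' ⊆ V → W' = W

/-- Dimension of a projective variety, as the longest chain of irreducible
subvarieties; the empty set has dimension `-1`. -/
noncomputable def projDim (n : ℕ) (V : Set (Projectivization F (Fin (n + 1) → F))) : ℤ :=
  if V.Nonempty then
    ((sSup {m : ℕ | ∃ W : Fin (m + 1) → Set (Projectivization F (Fin (n + 1) → F)),
      (∀ i, IsIrredProjVariety F n (W i) ∧ W i ⊆ V) ∧
      ∀ i j, i < j → W i ⊂ W j} : ℕ) : ℤ)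
  else -1

/-- `L` is a projective linear subspace of (projective) dimension `k` in `ℙ^n`. -/
def IsProjSubspaceOfDim (n k : ℕ) (L : Set (Projectivization F (Fin (n + 1) → F))) : Prop :=
  ∃ E : Submodule F (Fin (n + 1) → F), Module.finrank F E = k + 1 ∧
    L = {x | x.rep ∈ E}

/-- Degree of an irreducible projective variety: the largest finite number of
points in its intersection with a linear subspace of complementary dimension. -/
noncomputable def projIrredDegree (n : ℕ) (V : Set (Projectivization F (Fin (n + 1) → F))) : ℕ :=
  sSup {m : ℕ | ∃ L, IsProjSubspaceOfDim F n (n - (projDim F n V).toNat) L ∧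
    (V ∩ L).Finite ∧ (V ∩ L).ncard = m}

/-- Degree of a projective variety: the sum of the degrees of its irreducible
components. -/
noncomputable def projDegree (n : ℕ) (V : Set (Projectivization F (Fin (n + 1) → F))) : ℕ :=
  ∑ᶠ W ∈ {W | IsProjIrredComponent F n W V}, projIrredDegree F n W

/-- `W` evades `V` if for every irreducible component `Vᵢ` of `V` one has
`dim (Vᵢ ∩ W) ≤ dim Vᵢ + dim W - n`. -/
def Evades (n : ℕ) (W V : Set (Projectivization F (Fin (n + 1) → F))) : Prop :=
  ∀ Vi, IsProjIrredComponent F n Vi V →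
    projDim F n (Vi ∩ W) ≤ projDim F n Vi + projDim F n W - (n : ℤ)

namespace ChowAux

variable {F} {n : ℕ}

abbrev Pt (F : Type) [Field F] (n : ℕ) := Projectivization F (Fin (n + 1) → F)

-- singleton is an irreducible variety
lemma variety_inter {A B : Set (Pt F n)} (hA : IsProjVariety F n A)
    (hB : IsProjVariety F n B) : IsProjVariety F n (A ∩ B) := by
  obtain ⟨S, hS, rfl⟩ := hA
  obtain ⟨T, hT, rfl⟩ := hB
  refine ⟨S ∪ T, ?_, ?_⟩
  · rintro f (hf | hf)
    exacts [hS f hf, hT f hf]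
  · rw [Set.biInter_union]

lemma variety_union {A B : Set (Pt F n)} (hA : IsProjVariety F n A)
    (hB : IsProjVariety F n B) : IsProjVariety F n (A ∪ B) := by
  obtain ⟨S, hS, rfl⟩ := hA
  obtain ⟨T, hT, rfl⟩ := hB
  refine ⟨Set.image2 (· * ·) S T, ?_, ?_⟩
  · rintro f ⟨g, hg, h, hh, rfl⟩
    obtain ⟨mg, hmg⟩ := hS g hg
    obtain ⟨mh, hmh⟩ := hT h hh
    exact ⟨mg + mh, hmg.mul hmh⟩
  · ext x
    simp only [Set.mem_union, Set.mem_iInter, projZeroSet, Set.mem_setOf_eq,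
      Set.mem_image2]
    constructor
    · rintro (h | h) f ⟨g, hg, h', hh', rfl⟩ <;>
        simp only [map_mul]
      · rw [h g hg, zero_mul]
      · rw [h h' hh', mul_zero]
    · intro h
      by_cases hx : ∀ g ∈ S, (eval x.rep) g = 0
      · exact Or.inl hx
      · push_neg at hx
        obtain ⟨g, hg, hgx⟩ := hx
        refine Or.inr fun f hf => ?_
        have := h (g * f) ⟨g, hg, f, hf, rfl⟩
        rw [map_mul] at this
        exact (mul_eq_zero.1 this).resolve_left hgx

lemma variety_empty : IsProjVariety F n (∅ : Set (Pt F n)) := by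
  refine ⟨Set.range X, ?_, ?_⟩
  · rintro f ⟨j, rfl⟩
    exact ⟨1, isHomogeneous_X _ _⟩
  · symm
    rw [Set.eq_empty_iff_forall_notMem]
    intro x hx
    simp only [Set.mem_iInter, Set.mem_range, projZeroSet, Set.mem_setOf_eq,
      forall_exists_index] at hx
    apply x.rep_nonzero
    funext j
    simpa using hx (X j) j rfl

lemma variety_zeroSet {f : MvPolynomial (Fin (n + 1)) F} {m : ℕ} (hf : f.IsHomogeneous m) :
    IsProjVariety F n (projZeroSet F n f) := by
  refine ⟨{f}, fun g hg => ⟨m, by rwa [Set.mem_singleton_iff.1 hg]⟩, by simp⟩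

lemma variety_univ : IsProjVariety F n (Set.univ : Set (Pt F n)) :=
  ⟨∅, by simp, by simp⟩

/-- the set of homogeneous polynomials vanishing on W -/
def vanishSet (W : Set (Pt F n)) : Set (MvPolynomial (Fin (n + 1)) F) :=
  {f | (∃ m, f.IsHomogeneous m) ∧ ∀ x ∈ W, eval x.rep f = 0}

lemma recovery {W : Set (Pt F n)} (hW : IsProjVariety F n W) :
    (⋂ f ∈ vanishSet W, projZeroSet F n f) = W := by
  obtain ⟨S, hS, rfl⟩ := hW
  apply subset_antisymm
  · intro x hx
    simp only [Set.mem_iInter] at hx ⊢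
    intro f hf
    refine hx f ⟨hS f hf, ?_⟩
    intro y hy
    simp only [Set.mem_iInter] at hy
    exact hy f hf
  · intro x hx
    simp only [Set.mem_iInter] at hx ⊢
    intro f hf
    exact hf.2 x (by simp only [Set.mem_iInter]; exact hx)

lemma vanishSet_isVariety {W : Set (Pt F n)} (hW : IsProjVariety F n W) :
    IsProjVariety F n (⋂ f ∈ vanishSet W, projZeroSet F n f) :=
  ⟨vanishSet W, fun f hf => hf.1, rfl⟩

/-- key consequence of irreducibility at the level of homogeneous polynomials -/
lemma key_prime {W : Set (Pt F n)} (hW : IsIrredProjVariety F n W)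
    {f g : MvPolynomial (Fin (n + 1)) F} {mf mg : ℕ}
    (hf : f.IsHomogeneous mf) (hg : g.IsHomogeneous mg)
    (hfg : ∀ x ∈ W, eval x.rep f * eval x.rep g = 0)
    {x0 : Pt F n} (hx0 : x0 ∈ W) (hfx0 : eval x0.rep f ≠ 0) :
    ∀ x ∈ W, eval x.rep g = 0 := by
  have hsub : W ⊆ projZeroSet F n f ∪ projZeroSet F n g := by
    intro x hx
    rcases mul_eq_zero.1 (hfg x hx) with h | h
    · exact Or.inl h
    · exact Or.inr h
  rcases hW.2.2 _ _ (variety_zeroSet hf) (variety_zeroSet hg) hsub with h | h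
  · exact absurd (h hx0) hfx0
  · exact fun x hx => h hx


lemma singleton_irred (p : Pt F n) : IsIrredProjVariety F n ({p} : Set (Pt F n)) := by
  classical
  refine ⟨?_, ⟨p, rfl⟩, ?_⟩
  · refine ⟨(fun (c : Fin (n + 1) → F) => ∑ j, C (c j) * X j) ''
      {c | ∑ j, c j * p.rep j = 0}, ?_, ?_⟩
    · rintro f ⟨c, hc, rfl⟩
      exact ⟨1, IsHomogeneous.sum _ _ _ fun j _ => isHomogeneous_C_mul_X _ _⟩
    · ext x
      simp only [Set.mem_singleton_iff, Set.mem_iInter, Set.mem_image, Set.mem_setOf_eq,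
        forall_exists_index, and_imp]
      constructor
      · rintro rfl f c hc rfl
        simp only [projZeroSet, Set.mem_setOf_eq, eval_sum, map_mul, eval_C, eval_X]
        exact hc
      · intro hx
        have key : ∀ c : Fin (n + 1) → F, (∑ j, c j * p.rep j = 0) →
            ∑ j, c j * x.rep j = 0 := by
          intro c hc
          have := hx _ c hc rfl
          simpa only [projZeroSet, Set.mem_setOf_eq, eval_sum, map_mul, eval_C, eval_X]
            using this
        have hw := p.rep_nonzero
        obtain ⟨j0, hj0⟩ : ∃ j0, p.rep j0 ≠ 0 := by
          by_contra h
          push_neg at h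
          exact hw (funext h)
        have hscal : ∀ k, p.rep j0 * x.rep k = p.rep k * x.rep j0 := by
          intro k
          set c : Fin (n + 1) → F := fun j =>
            (if j = k then p.rep j0 else 0) - (if j = j0 then p.rep k else 0) with hcdef
          have hsum : ∀ v : Fin (n + 1) → F,
              ∑ j, c j * v j = p.rep j0 * v k - p.rep k * v j0 := by
            intro v
            simp [hcdef, sub_mul, ite_mul, Finset.sum_sub_distrib, Finset.sum_ite_eq']
          have hcp : ∑ j, c j * p.rep j = 0 := by rw [hsum]; ring
          have := key c hcp
          rw [hsum] at this
          exact sub_eq_zero.mp this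
        have hxv : x.rep = (x.rep j0 * (p.rep j0)⁻¹) • p.rep := by
          funext k
          have h1 := hscal k
          simp only [Pi.smul_apply, smul_eq_mul]
          field_simp
          calc x.rep k * p.rep j0 = p.rep j0 * x.rep k := by ring
          _ = p.rep k * x.rep j0 := h1
          _ = x.rep j0 * p.rep k := by ring
        have hxne := x.rep_nonzero
        have hane : x.rep j0 * (p.rep j0)⁻¹ ≠ 0 := by
          intro h
          apply hxne
          rw [hxv, h, zero_smul]
        have : Projectivization.mk F x.rep x.rep_nonzero =
            Projectivization.mk F p.rep p.rep_nonzero := by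
          rw [Projectivization.mk_eq_mk_iff]
          exact ⟨Units.mk0 _ hane, by simp only [Units.smul_def, Units.val_mk0]; exact hxv.symm⟩
        rw [Projectivization.mk_rep, Projectivization.mk_rep] at this
        exact this
  · intro A B hA hB hsub
    rcases hsub rfl with h | h
    · exact Or.inl (by simpa using h)
    · exact Or.inr (by simpa using h)


section Decomp

/-- functions vanishing on W form an ideal -/
noncomputable def vanIdeal (W : Set (Pt F n)) : Ideal (MvPolynomial (Fin (n + 1)) F) :=
  ⨅ x ∈ W, RingHom.ker (MvPolynomial.eval x.rep : MvPolynomial (Fin (n + 1)) F →+* F)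

lemma mem_vanIdeal {W : Set (Pt F n)} {g : MvPolynomial (Fin (n + 1)) F} :
    g ∈ vanIdeal W ↔ ∀ x ∈ W, eval x.rep g = 0 := by
  simp [vanIdeal, Ideal.mem_iInf, RingHom.mem_ker]

lemma span_vanish_le (W : Set (Pt F n)) :
    Ideal.span (vanishSet W) ≤ vanIdeal W := by
  rw [Ideal.span_le]
  intro f hf
  exact mem_vanIdeal.2 hf.2

lemma span_vanish_strict_mono {W1 W : Set (Pt F n)} (hW1 : IsProjVariety F n W1)
    (hsub : W1 ⊂ W) :
    Ideal.span (vanishSet W) < Ideal.span (vanishSet W1) := by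
  constructor
  · apply Ideal.span_mono
    intro f hf
    exact ⟨hf.1, fun x hx => hf.2 x (hsub.1 hx)⟩
  · intro hle
    obtain ⟨x, hxW, hxW1⟩ := Set.exists_of_ssubset hsub
    have hx' : x ∉ ⋂ f ∈ vanishSet W1, projZeroSet F n f := by
      rw [recovery hW1]; exact hxW1
    simp only [Set.mem_iInter, projZeroSet, Set.mem_setOf_eq, not_forall] at hx'
    obtain ⟨f, hf, hfx⟩ := hx'
    have : f ∈ Ideal.span (vanishSet W) := hle (Ideal.subset_span hf)
    exact hfx (mem_vanIdeal.1 (span_vanish_le W this) x hxW)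

lemma sUnion_list_variety : ∀ l : List (Set (Pt F n)),
    (∀ U ∈ l, IsProjVariety F n U) → IsProjVariety F n (⋃₀ {U | U ∈ l})
  | [], _ => by
      simpa using (variety_empty : IsProjVariety F n ∅)
  | (U :: l'), h => by
      have : {A | A ∈ U :: l'} = insert U {A | A ∈ l'} := by
        ext A; simp [List.mem_cons]
      rw [this, Set.sUnion_insert]
      exact variety_union (h U (by simp)) (sUnion_list_variety l'
        (fun A hA => h A (List.mem_cons_of_mem _ hA)))

lemma irred_subset_mem : ∀ l : List (Set (Pt F n)), ∀ {W : Set (Pt F n)},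
    IsIrredProjVariety F n W → (∀ U ∈ l, IsProjVariety F n U) →
    W ⊆ ⋃₀ {U | U ∈ l} → ∃ U ∈ l, W ⊆ U
  | [], W, hW, _, hsub => by
      obtain ⟨p, hp⟩ := hW.2.1
      have := hsub hp
      simp at this
  | (U :: l'), W, hW, hvar, hsub => by
      have heq : {A | A ∈ U :: l'} = insert U {A | A ∈ l'} := by
        ext A; simp [List.mem_cons]
      rw [heq, Set.sUnion_insert] at hsub
      rcases hW.2.2 _ _ (hvar U (by simp))
        (sUnion_list_variety l' (fun A hA => hvar A (List.mem_cons_of_mem _ hA))) hsub with h | h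
      · exact ⟨U, by simp, h⟩
      · obtain ⟨U', hU', hWU'⟩ := irred_subset_mem l' hW
          (fun A hA => hvar A (List.mem_cons_of_mem _ hA)) h
        exact ⟨U', List.mem_cons_of_mem _ hU', hWU'⟩

/-- every projective variety is a finite union of irreducible ones -/
lemma decomp {V : Set (Pt F n)} (hV : IsProjVariety F n V) :
    ∃ l : List (Set (Pt F n)), (∀ U ∈ l, IsIrredProjVariety F n U) ∧
      V = ⋃₀ {U | U ∈ l} := by
  classical
  by_contra hcon
  set 𝒞 : Set (Set (Pt F n)) := {W | IsProjVariety F n W ∧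
    ¬ ∃ l : List (Set (Pt F n)), (∀ U ∈ l, IsIrredProjVariety F n U) ∧
      W = ⋃₀ {U | U ∈ l}} with h𝒞
  have hV𝒞 : V ∈ 𝒞 := ⟨hV, hcon⟩
  have wf : WellFounded ((· > ·) : Ideal (MvPolynomial (Fin (n + 1)) F) →
      Ideal (MvPolynomial (Fin (n + 1)) F) → Prop) := IsWellFounded.wf
  obtain ⟨J0, hJ0I, hJ0max⟩ := wf.has_min
    ((fun W => Ideal.span (vanishSet W)) '' 𝒞) ⟨_, ⟨V, hV𝒞, rfl⟩⟩
  obtain ⟨W0, hW0𝒞, rfl⟩ := hJ0I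
  by_cases hW0ne : W0.Nonempty
  · -- W0 is not irreducible
    have hW0notirr : ¬ IsIrredProjVariety F n W0 := by
      intro hirr
      refine hW0𝒞.2 ⟨[W0], ?_, ?_⟩
      · intro U hU
        rw [List.mem_singleton] at hU
        rwa [hU]
      · have : {U | U ∈ [W0]} = ({W0} : Set (Set (Pt F n))) := by
          ext U; simp
        rw [this, Set.sUnion_singleton]
    rw [IsIrredProjVariety] at hW0notirr
    push_neg at hW0notirr
    obtain ⟨A, B, hA, hB, hsub, hnA, hnB⟩ := hW0notirr hW0𝒞.1 hW0ne
    have key : ∀ W1 : Set (Pt F n), IsProjVariety F n W1 → W1 ⊂ W0 →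
        ∃ l : List (Set (Pt F n)), (∀ U ∈ l, IsIrredProjVariety F n U) ∧
          W1 = ⋃₀ {U | U ∈ l} := by
      intro W1 hW1 hss
      by_contra hW1no
      exact hJ0max _ ⟨W1, ⟨hW1, hW1no⟩, rfl⟩ (span_vanish_strict_mono hW1 hss)
    obtain ⟨l1, hl1, he1⟩ := key (W0 ∩ A) (variety_inter hW0𝒞.1 hA)
      ⟨Set.inter_subset_left, fun habs => hnA (fun x hx => (habs hx).2)⟩
    obtain ⟨l2, hl2, he2⟩ := key (W0 ∩ B) (variety_inter hW0𝒞.1 hB)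
      ⟨Set.inter_subset_left, fun habs => hnB (fun x hx => (habs hx).2)⟩
    refine hW0𝒞.2 ⟨l1 ++ l2, ?_, ?_⟩
    · intro U hU
      rcases List.mem_append.1 hU with h | h
      exacts [hl1 U h, hl2 U h]
    · have : {U | U ∈ l1 ++ l2} = {U | U ∈ l1} ∪ {U | U ∈ l2} := by
        ext U; simp [List.mem_append]
      rw [this, Set.sUnion_union, ← he1, ← he2]
      apply subset_antisymm
      · intro x hx
        rcases hsub hx with h | h
        exacts [Or.inl ⟨hx, h⟩, Or.inr ⟨hx, h⟩]
      · rintro x (⟨hx, _⟩ | ⟨hx, _⟩) <;> exact hx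
  · rw [Set.not_nonempty_iff_eq_empty] at hW0ne
    exact hW0𝒞.2 ⟨[], by simp, by simp [hW0ne]⟩

/-- every irreducible subvariety of a variety is contained in an irreducible component -/
lemma exists_component {V W' : Set (Pt F n)} (hV : IsProjVariety F n V)
    (hW' : IsIrredProjVariety F n W') (hsub : W' ⊆ V) :
    ∃ C, IsProjIrredComponent F n C V ∧ W' ⊆ C := by
  classical
  obtain ⟨l, hl, rfl⟩ := decomp hV
  have hvar : ∀ U ∈ l, IsProjVariety F n U := fun U hU => (hl U hU).1
  set T : Finset (Set (Pt F n)) := l.toFinset.filter (fun U => W' ⊆ U) with hT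
  have hTne : T.Nonempty := by
    obtain ⟨U, hUl, hWU⟩ := irred_subset_mem l hW' hvar hsub
    exact ⟨U, by simp [hT, hUl, hWU]⟩
  obtain ⟨C, hCT, hCmax⟩ := T.exists_maximal hTne
  simp only [hT, Finset.mem_filter, List.mem_toFinset] at hCT
  refine ⟨C, ⟨hl C hCT.1, ?_, ?_⟩, hCT.2⟩
  · exact Set.subset_sUnion_of_mem hCT.1
  · intro W'' hW'' hCW'' hW''V
    obtain ⟨U', hU'l, hWU'⟩ := irred_subset_mem l hW'' hvar hW''V
    have hU'T : U' ∈ T := by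
      simp only [hT, Finset.mem_filter, List.mem_toFinset]
      exact ⟨hU'l, hCT.2.trans (hCW''.trans hWU')⟩
    have hCU' : C ⊆ U' := hCW''.trans hWU'
    have : ¬ C < U' := fun hlt => hlt.not_ge (hCmax hU'T hlt.le)
    have hU'C : U' ⊆ C := by
      rcases eq_or_ne C U' with rfl | hne
      · exact le_rfl
      · exact absurd (lt_of_le_of_ne hCU' hne) this
    exact subset_antisymm (hWU'.trans hU'C) hCW''

end Decomp

section Hyperplanes

/-- the linear form with coefficients `s ^ j` -/
noncomputable def lform (s : F) : MvPolynomial (Fin (n + 1)) F :=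
  ∑ j : Fin (n + 1), C (s ^ (j : ℕ)) * X j

lemma lform_homog (s : F) : (lform (n := n) s).IsHomogeneous 1 :=
  IsHomogeneous.sum _ _ _ fun j _ => isHomogeneous_C_mul_X _ _

/-- the hyperplane cut out by `lform s` -/
noncomputable def Hs (s : F) : Set (Pt F n) := projZeroSet F n (lform s)

lemma Hs_variety (s : F) : IsProjVariety F n (Hs (n := n) s) :=
  variety_zeroSet (lform_homog s)

lemma mem_Hs {x : Pt F n} {s : F} :
    x ∈ Hs (n := n) s ↔ ∑ j : Fin (n + 1), s ^ (j : ℕ) * x.rep j = 0 := by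
  simp [Hs, projZeroSet, lform, eval_sum]

/-- the single-variable polynomial whose coefficients are the coordinates of `x` -/
noncomputable def qpoly (x : Pt F n) : Polynomial F :=
  ∑ j : Fin (n + 1), Polynomial.monomial (j : ℕ) (x.rep j)

lemma qpoly_coeff (x : Pt F n) (j0 : Fin (n + 1)) :
    (qpoly x).coeff (j0 : ℕ) = x.rep j0 := by
  classical
  rw [qpoly, Polynomial.finset_sum_coeff]
  simp only [Polynomial.coeff_monomial, Fin.val_inj]
  rw [Finset.sum_ite_eq' Finset.univ j0 (fun j => x.rep j)]
  simp

lemma qpoly_ne_zero (x : Pt F n) : qpoly x ≠ 0 := by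
  intro h
  apply x.rep_nonzero
  funext j
  have := qpoly_coeff x j
  rw [h, Polynomial.coeff_zero] at this
  exact this.symm ▸ rfl

lemma mem_Hs_iff_root {x : Pt F n} {s : F} :
    x ∈ Hs (n := n) s ↔ (qpoly x).IsRoot s := by
  rw [mem_Hs, Polynomial.IsRoot, qpoly, Polynomial.eval_finset_sum]
  simp only [Polynomial.eval_monomial]
  constructor <;> intro h <;> rw [← h] <;> exact Finset.sum_congr rfl fun j _ => mul_comm _ _

lemma finite_hits_of_nonempty {U : Set (Pt F n)} (hU : U.Nonempty) :
    {s : F | U ⊆ Hs (n := n) s}.Finite := by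
  obtain ⟨p, hp⟩ := hU
  apply Set.Finite.subset (Polynomial.finite_setOf_isRoot (qpoly_ne_zero p))
  intro s hs
  exact mem_Hs_iff_root.1 (hs hp)

lemma exists_missing_of_finite {X : Set (Pt F n)} (hfin : X.Finite) :
    ∃ s : F, ∀ x ∈ X, x ∉ Hs (n := n) s := by
  have hb : (⋃ x ∈ X, {s : F | (qpoly x).IsRoot s}).Finite :=
    Set.Finite.biUnion hfin fun x _ => Polynomial.finite_setOf_isRoot (qpoly_ne_zero x)
  obtain ⟨s, hs⟩ := hb.exists_notMem
  refine ⟨s, fun x hx hxs => hs ?_⟩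
  exact Set.mem_biUnion hx (mem_Hs_iff_root.1 hxs)

lemma iInter_fin_succ {α : Type*} {k : ℕ} (g : Fin (k + 2) → Set α) :
    (⋂ i, g i) = g 0 ∩ ⋂ i : Fin (k + 1), g i.succ := by
  ext x
  simp only [Set.mem_iInter, Set.mem_inter_iff]
  exact ⟨fun h => ⟨h 0, fun i => h i.succ⟩, fun h i => Fin.cases h.1 h.2 i⟩

/-- If every "moment-curve" linear space of codimension `k+1` meets `X`,
then `X` contains a strictly increasing chain of `k+2` irreducible subvarieties. -/
lemma chain_of_hits : ∀ (k : ℕ) (X : Set (Pt F n)), IsProjVariety F n X →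
    (∀ s : Fin (k + 1) → F, (X ∩ ⋂ i, Hs (n := n) (s i)).Nonempty) →
    ∃ W : ℕ → Set (Pt F n), (∀ i ≤ k + 1, IsIrredProjVariety F n (W i) ∧ W i ⊆ X) ∧
      ∀ i < k + 1, W i ⊂ W (i + 1) := by
  intro k
  induction k with
  | zero =>
    intro X hX hhit
    have hhit1 : ∀ s0 : F, (X ∩ Hs (n := n) s0).Nonempty := by
      intro s0
      have := hhit (fun _ => s0)
      rwa [Set.iInter_const] at this
    obtain ⟨l, hl, hXl⟩ := decomp hX
    by_cases hbig : ∃ U ∈ l, ∃ p ∈ U, ∃ q ∈ U, p ≠ q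
    · obtain ⟨U, hUl, p, hp, q, hq, hpq⟩ := hbig
      refine ⟨fun i => if i = 0 then {p} else U, ?_, ?_⟩
      · intro i hi
        by_cases h0 : i = 0
        · simp only [h0, if_pos rfl]
          refine ⟨singleton_irred p, ?_⟩
          intro y hy
          rw [Set.mem_singleton_iff.1 hy, hXl]
          exact Set.subset_sUnion_of_mem hUl hp
        · simp only [if_neg h0]
          refine ⟨hl U hUl, ?_⟩
          rw [hXl]
          exact Set.subset_sUnion_of_mem hUl
      · intro i hi
        have : i = 0 := by omega
        subst this
        simp only [if_pos rfl, if_neg one_ne_zero]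
        constructor
        · intro y hy
          rw [Set.mem_singleton_iff.1 hy]; exact hp
        · intro habs
          exact hpq (Set.mem_singleton_iff.1 (habs hq)).symm
    · push_neg at hbig
      have hXfin : X.Finite := by
        rw [hXl]
        apply Set.Finite.sUnion
        · exact (l.toFinset.finite_toSet.subset (by intro U hU; simpa using hU))
        · intro U hU
          have hUl : U ∈ l := hU
          obtain ⟨p, hp⟩ := (hl U hUl).2.1
          apply Set.Finite.subset (Set.finite_singleton p)
          intro q hq
          rw [Set.mem_singleton_iff]
          by_contra hne
          exact hne (by
            have := hbig U hUl q hq p hp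
            by_contra hne2
            exact hne2 (by
              by_contra hne3
              exact hne3 this))
      obtain ⟨s, hs⟩ := exists_missing_of_finite hXfin
      obtain ⟨x, hx1, hx2⟩ := hhit1 s
      exact absurd hx2 (hs x hx1)
  | succ k IH =>
    intro X hX hhit
    obtain ⟨l, hl, hXl⟩ := decomp hX
    -- choose s0 such that no irreducible piece of X is contained in Hs s0
    have hb : (⋃ U ∈ {U | U ∈ l}, {s : F | U ⊆ Hs (n := n) s}).Finite := by
      apply Set.Finite.biUnion
      · exact l.toFinset.finite_toSet.subset (by intro U hU; simpa using hU)
      · intro U hU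
        exact finite_hits_of_nonempty (hl U hU).2.1
    obtain ⟨s0, hs0⟩ := hb.exists_notMem
    have hs0' : ∀ U ∈ l, ¬ U ⊆ Hs (n := n) s0 := by
      intro U hUl hsub
      exact hs0 (Set.mem_biUnion hUl hsub)
    set X' : Set (Pt F n) := X ∩ Hs (n := n) s0 with hX'def
    have hX'var : IsProjVariety F n X' := variety_inter hX (Hs_variety s0)
    have hX'hit : ∀ s : Fin (k + 1) → F, (X' ∩ ⋂ i, Hs (n := n) (s i)).Nonempty := by
      intro s
      have := hhit (Fin.cons s0 s)
      rw [iInter_fin_succ (fun i => Hs (n := n) (Fin.cons s0 s i))] at this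
      simp only [Fin.cons_zero, Fin.cons_succ] at this
      obtain ⟨x, hx⟩ := this
      exact ⟨x, ⟨hx.1, hx.2.1⟩, hx.2.2⟩
    obtain ⟨W, hW, hWmono⟩ := IH X' hX'var hX'hit
    -- the top of the chain
    have htop : W (k + 1) ⊆ X' := (hW (k + 1) le_rfl).2
    obtain ⟨U, hUl, hWU⟩ := irred_subset_mem l (hW (k + 1) le_rfl).1
      (fun A hA => (hl A hA).1) (htop.trans (hXl ▸ Set.inter_subset_left))
    have hUstrict : W (k + 1) ⊂ U := by
      refine ⟨hWU, fun habs => ?_⟩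
      exact hs0' U hUl (fun u hu => (htop (habs hu)).2)
    refine ⟨fun i => if i = k + 2 then U else W i, ?_, ?_⟩
    · intro i hi
      by_cases hik : i = k + 2
      · simp only [hik, if_pos rfl]
        refine ⟨hl U hUl, hXl ▸ Set.subset_sUnion_of_mem hUl⟩
      · simp only [if_neg hik]
        have : i ≤ k + 1 := by omega
        exact ⟨(hW i this).1, ((hW i this).2).trans Set.inter_subset_left⟩
    · intro i hi
      by_cases hik : i = k + 1
      · subst hik
        simp only [if_neg (by omega : ¬ k + 1 = k + 2), if_pos rfl]
        exact hUstrict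
      · have h1 : i < k + 1 := by omega
        simp only [if_neg (by omega : ¬ i = k + 2), if_neg (by omega : ¬ i + 1 = k + 2)]
        exact hWmono i h1

end Hyperplanes

section Hilbert

/-- evaluation of homogeneous degree-`d` polynomials at the points of `W` -/
noncomputable def Emap (W : Set (Pt F n)) (d : ℕ) :
    ↥(homogeneousSubmodule (Fin (n + 1)) F d) →ₗ[F] (W → F) where
  toFun f x := eval (x : Pt F n).rep f.1
  map_add' f g := by funext x; simp
  map_smul' c f := by
    funext x
    simp [smul_eq_C_mul]

lemma Emap_apply (W : Set (Pt F n)) (d : ℕ) (f : ↥(homogeneousSubmodule (Fin (n + 1)) F d))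
    (x : W) : Emap W d f x = eval (x : Pt F n).rep f.1 := rfl

/-- the coefficient embedding, giving finite-dimensionality of each graded piece -/
noncomputable def coefMap (d : ℕ) :
    ↥(homogeneousSubmodule (Fin (n + 1)) F d) →ₗ[F] ((Fin (n + 1) → Fin (d + 1)) → F) where
  toFun f v := coeff (Finsupp.equivFunOnFinite.symm (fun j => ((v j : ℕ)))) f.1
  map_add' f g := by funext v; simp
  map_smul' c f := by funext v; simp

lemma coefMap_injective (d : ℕ) : Function.Injective (coefMap (F := F) (n := n) d) := by
  intro f g hfg
  ext u
  -- it suffices to consider exponents with all entries ≤ d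
  by_cases hc : coeff u f.1 = coeff u g.1
  · exact hc
  have hne : coeff u (f.1 - g.1) ≠ 0 := by
    rwa [coeff_sub, sub_ne_zero]
  have hhom : (f.1 - g.1).IsHomogeneous d := by
    have hf := (mem_homogeneousSubmodule d f.1).1 f.2
    have hg := (mem_homogeneousSubmodule d g.1).1 g.2
    exact hf.sub hg
  have hdeg : (Finsupp.weight 1) u = d := hhom hne
  have hsum : ∑ j ∈ u.support, u j = d := by
    rw [Finsupp.weight_apply] at hdeg
    simpa [Finsupp.sum, mul_one] using hdeg
  have hle : ∀ j, u j ≤ d := by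
    intro j
    by_cases hj : j ∈ u.support
    · rw [← hsum]
      exact Finset.single_le_sum (fun _ _ => Nat.zero_le _) hj
    · simp [Finsupp.notMem_support_iff.1 hj]
  set v : Fin (n + 1) → Fin (d + 1) := fun j => ⟨u j, Nat.lt_succ_of_le (hle j)⟩ with hv
  have hvu : Finsupp.equivFunOnFinite.symm (fun j => ((v j : ℕ))) = u := by
    have : (fun j => ((v j : ℕ))) = ⇑u := by funext j; simp [hv]
    rw [this, Finsupp.equivFunOnFinite_symm_coe]
  have := congrFun hfg v
  simp only [coefMap, LinearMap.coe_mk, AddHom.coe_mk, hvu] at this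
  exact absurd this hc

noncomputable instance homSub_findim (d : ℕ) :
    FiniteDimensional F ↥(homogeneousSubmodule (Fin (n + 1)) F d) :=
  FiniteDimensional.of_injective (coefMap d) (coefMap_injective d)

lemma finrank_homSub_le (d : ℕ) :
    Module.finrank F ↥(homogeneousSubmodule (Fin (n + 1)) F d) ≤ (d + 1) ^ (n + 1) := by
  have := LinearMap.finrank_le_finrank_of_injective (coefMap_injective (F := F) (n := n) d)
  rwa [Module.finrank_fintype_fun_eq_card, Fintype.card_fun, Fintype.card_fin,
    Fintype.card_fin] at this

/-- Hilbert function of `W` in degree `d` -/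
noncomputable def hdim (W : Set (Pt F n)) (d : ℕ) : ℕ :=
  Module.finrank F ↥(LinearMap.range (Emap W d))

lemma hdim_le (W : Set (Pt F n)) (d : ℕ) : hdim W d ≤ (d + 1) ^ (n + 1) :=
  le_trans (LinearMap.finrank_range_le (Emap W d)) (finrank_homSub_le d)

lemma one_le_hdim {W : Set (Pt F n)} (hW : W.Nonempty) (d : ℕ) : 1 ≤ hdim W d := by
  obtain ⟨p, hp⟩ := hW
  obtain ⟨j0, hj0⟩ : ∃ j0, p.rep j0 ≠ 0 := by
    by_contra h
    push_neg at h
    exact p.rep_nonzero (funext h)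
  have hmem : (X j0 : MvPolynomial (Fin (n + 1)) F) ^ d ∈
      homogeneousSubmodule (Fin (n + 1)) F d :=
    (mem_homogeneousSubmodule d _).2 (isHomogeneous_X_pow j0 d)
  set φ : W → F := Emap W d ⟨_, hmem⟩ with hφ
  have hφne : φ ≠ 0 := by
    intro h0
    have := congrFun h0 ⟨p, hp⟩
    simp only [hφ, Emap_apply, Pi.zero_apply] at this
    rw [map_pow, eval_X] at this
    exact pow_ne_zero d hj0 this
  rw [hdim, Nat.one_le_iff_ne_zero]
  intro h0
  rw [Module.finrank_zero_iff] at h0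
  have h2 : (⟨φ, by rw [hφ]; exact LinearMap.mem_range_self _ _⟩ :
      ↥(LinearMap.range (Emap W d))) = 0 := Subsingleton.elim _ _
  exact hφne (congrArg Subtype.val h2)

/-- pointwise multiplication by a fixed function, as a linear map -/
noncomputable def mulLM {W : Set (Pt F n)} (a : W → F) : (W → F) →ₗ[F] (W → F) where
  toFun φ x := a x * φ x
  map_add' φ ψ := by funext x; simp [mul_add]
  map_smul' c φ := by funext x; simp; ring

lemma hdim_mono {W : Set (Pt F n)} (hW : IsIrredProjVariety F n W) (d : ℕ) :
    hdim W d ≤ hdim W (d + 1) := by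
  obtain ⟨p, hp⟩ := hW.2.1
  obtain ⟨j0, hj0⟩ : ∃ j0, p.rep j0 ≠ 0 := by
    by_contra h
    push_neg at h
    exact p.rep_nonzero (funext h)
  set a : W → F := fun x => (x : Pt F n).rep j0 with ha
  have hcod : ∀ c : ↥(LinearMap.range (Emap W d)),
      (mulLM a) ((LinearMap.range (Emap W d)).subtype c) ∈ LinearMap.range (Emap W (d + 1)) := by
    rintro ⟨φ, f, rfl⟩
    refine ⟨⟨X j0 * f.1, (mem_homogeneousSubmodule _ _).2 ?_⟩, ?_⟩
    · have h := (isHomogeneous_X F j0).mul ((mem_homogeneousSubmodule d f.1).1 f.2)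
      rwa [add_comm 1 d] at h
    · funext x
      simp [Emap_apply, mulLM, ha]
  set M := LinearMap.codRestrict (LinearMap.range (Emap W (d + 1)))
    ((mulLM a).comp (LinearMap.range (Emap W d)).subtype) hcod with hM
  have hMinj : Function.Injective M := by
    rw [← LinearMap.ker_eq_bot, LinearMap.ker_eq_bot']
    rintro ⟨φ, f, rfl⟩ hm0
    have h0 : ∀ x : W, (x : Pt F n).rep j0 * (Emap W d f) x = 0 := by
      intro x
      have := congrArg Subtype.val hm0
      exact congrFun this x
    have hvan : ∀ x ∈ W, eval x.rep f.1 = 0 := by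
      refine key_prime hW (isHomogeneous_X F j0) ((mem_homogeneousSubmodule d f.1).1 f.2)
        ?_ hp ?_
      · intro x hx
        have := h0 ⟨x, hx⟩
        simpa [Emap_apply, eval_X] using this
      · simpa [eval_X] using hj0
    ext1
    funext x
    simp only [Emap_apply, Submodule.coe_zero, Pi.zero_apply]
    exact hvan x x.2
  exact LinearMap.finrank_le_finrank_of_injective hMinj

lemma hdim_mono' {W : Set (Pt F n)} (hW : IsIrredProjVariety F n W) {d d' : ℕ} (h : d ≤ d') :
    hdim W d ≤ hdim W d' := by
  induction d' with
  | zero => simpa [Nat.le_zero.1 h]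
  | succ k IH =>
    rcases Nat.lt_or_ge d (k + 1) with h' | h'
    · exact le_trans (IH (by omega)) (hdim_mono hW k)
    · have : d = k + 1 := by omega
      simp [this]

/-- the key "link" inequality along a strict inclusion of varieties -/
lemma hdim_link {W W' : Set (Pt F n)} (hW' : IsIrredProjVariety F n W') (hsub : W ⊆ W')
    {f₀ : MvPolynomial (Fin (n + 1)) F} {e : ℕ} (hf₀ : f₀.IsHomogeneous e)
    (hvan : ∀ x ∈ W, eval x.rep f₀ = 0)
    (hnz : ∃ x' ∈ W', eval x'.rep f₀ ≠ 0) {d : ℕ} (hed : e ≤ d) :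
    hdim W d + hdim W' (d - e) ≤ hdim W' d := by
  classical
  obtain ⟨x', hx', hfx'⟩ := hnz
  -- restriction of functions from W' to W
  set resLM : (W' → F) →ₗ[F] (W → F) :=
    { toFun := fun φ x => φ ⟨x.1, hsub x.2⟩
      map_add' := fun φ ψ => by funext x; simp
      map_smul' := fun c φ => by funext x; simp } with hres
  set π := resLM.comp (LinearMap.range (Emap W' d)).subtype with hπ
  have hrange : LinearMap.range π = LinearMap.range (Emap W d) := by
    apply le_antisymm
    · rintro φ ⟨⟨ψ, f, rfl⟩, rfl⟩
      exact ⟨f, by funext x; simp [hπ, hres, Emap_apply]⟩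
    · rintro φ ⟨f, rfl⟩
      exact ⟨⟨Emap W' d f, ⟨f, rfl⟩⟩, by funext x; simp [hπ, hres, Emap_apply]⟩
  have hrn := LinearMap.finrank_range_add_finrank_ker π
  rw [hrange] at hrn
  -- the kernel contains a copy of the degree d-e part of W'
  have hker : hdim W' (d - e) ≤ Module.finrank F ↥(LinearMap.ker π) := by
    set a : W' → F := fun x => eval (x : Pt F n).rep f₀ with ha
    have hcod1 : ∀ c : ↥(LinearMap.range (Emap W' (d - e))),
        (mulLM a) ((LinearMap.range (Emap W' (d - e))).subtype c) ∈
          LinearMap.range (Emap W' d) := by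
      rintro ⟨φ, g, rfl⟩
      refine ⟨⟨f₀ * g.1, (mem_homogeneousSubmodule _ _).2 ?_⟩, ?_⟩
      · have := hf₀.mul ((mem_homogeneousSubmodule _ g.1).1 g.2)
        rwa [Nat.add_sub_cancel' hed] at this
      · funext x
        simp [Emap_apply, mulLM, ha]
    set B := LinearMap.codRestrict (LinearMap.range (Emap W' d))
      ((mulLM a).comp (LinearMap.range (Emap W' (d - e))).subtype) hcod1 with hB
    have hcod2 : ∀ c, B c ∈ LinearMap.ker π := by
      intro c
      rw [LinearMap.mem_ker]
      have : (π (B c) : W → F) = fun x => a ⟨x.1, hsub x.2⟩ *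
          ((LinearMap.range (Emap W' (d - e))).subtype c) ⟨x.1, hsub x.2⟩ := by
        funext x
        simp [hπ, hres, hB, LinearMap.codRestrict_apply, mulLM]
      rw [this]
      funext x
      have : a ⟨x.1, hsub x.2⟩ = 0 := hvan x.1 x.2
      simp [this]
    set Φ := LinearMap.codRestrict (LinearMap.ker π) B hcod2 with hΦ
    have hker0 : ∀ c, Φ c = 0 → c = 0 := by
      rintro ⟨φ, g, rfl⟩ hm0
      have h0 : ∀ x : W', a x * (Emap W' (d - e) g) x = 0 := by
        intro x
        have h1 := congrArg Subtype.val (congrArg Subtype.val hm0)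
        exact congrFun h1 x
      have hvg : ∀ x ∈ W', eval x.rep g.1 = 0 := by
        refine key_prime hW' hf₀ ((mem_homogeneousSubmodule _ g.1).1 g.2) ?_ hx' hfx'
        intro x hx
        have := h0 ⟨x, hx⟩
        simpa [Emap_apply, ha] using this
      ext1
      funext x
      simp only [Emap_apply, Submodule.coe_zero, Pi.zero_apply]
      exact hvg x x.2
    have hΦinj : Function.Injective Φ := by
      intro c1 c2 hc
      have := hker0 (c1 - c2) (by rw [map_sub, hc, sub_self])
      exact sub_eq_zero.1 this
    exact LinearMap.finrank_le_finrank_of_injective hΦinj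
  have hrn' : hdim W d + Module.finrank F ↥(LinearMap.ker π) = hdim W' d := hrn
  omega

end Hilbert

section ChainBound

lemma exists_sep {W W' : Set (Pt F n)} (hW : IsProjVariety F n W) (hss : W ⊂ W') :
    ∃ (f : MvPolynomial (Fin (n + 1)) F) (e : ℕ), f.IsHomogeneous e ∧
      (∀ x ∈ W, eval x.rep f = 0) ∧ ∃ x' ∈ W', eval x'.rep f ≠ 0 := by
  obtain ⟨x, hxW', hxW⟩ := Set.exists_of_ssubset hss
  have hx' : x ∉ ⋂ f ∈ vanishSet W, projZeroSet F n f := by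
    rw [recovery hW]; exact hxW
  simp only [Set.mem_iInter, projZeroSet, Set.mem_setOf_eq, not_forall] at hx'
  obtain ⟨f, hf, hfx⟩ := hx'
  obtain ⟨e, he⟩ := hf.1
  exact ⟨f, e, he, hf.2, x, hxW', hfx⟩

lemma arith_choose (E N : ℕ) : ∃ m : ℕ, (E * m + 1) ^ (N + 1) < Nat.choose m (N + 2) := by
  set k := N + 2 with hk
  set B := Nat.factorial k with hB
  set c := E + E * k + 1 with hc
  set s := B * c ^ (N + 1) + 1 with hs
  refine ⟨s + k, ?_⟩
  have hs1 : 1 ≤ s := by omega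
  have hBpos : 0 < B := Nat.factorial_pos k
  have hEm : E * (s + k) + 1 ≤ c * s := by
    have h1 : E * k ≤ E * k * s := Nat.le_mul_of_pos_right _ (by omega)
    have h2 : E * (s + k) = E * s + E * k := by ring
    have h3 : c * s = E * s + E * k * s + s := by rw [hc]; ring
    omega
  have hchoose : s ^ k ≤ B * Nat.choose (s + k) k := by
    have h1 : (s + k + 1 - k) ^ k ≤ (s + k).descFactorial k :=
      Nat.pow_sub_le_descFactorial _ _
    rw [Nat.descFactorial_eq_factorial_mul_choose] at h1
    exact le_trans (Nat.pow_le_pow_left (by omega) _) h1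
  have hmain : B * (c * s) ^ (N + 1) < s ^ k := by
    have h1 : (c * s) ^ (N + 1) = c ^ (N + 1) * s ^ (N + 1) := mul_pow _ _ _
    have h2 : B * (c ^ (N + 1) * s ^ (N + 1)) = (B * c ^ (N + 1)) * s ^ (N + 1) := by ring
    have h3 : s ^ k = s ^ (N + 1) * s := by rw [hk]; ring
    rw [h1, h2, h3]
    have h4 : B * c ^ (N + 1) < s := by omega
    calc (B * c ^ (N + 1)) * s ^ (N + 1) < s * s ^ (N + 1) :=
          Nat.mul_lt_mul_of_lt_of_le h4 le_rfl (by positivity)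
    _ = s ^ (N + 1) * s := by ring
  have hfinal : B * (E * (s + k) + 1) ^ (N + 1) < B * Nat.choose (s + k) k := by
    calc B * (E * (s + k) + 1) ^ (N + 1) ≤ B * (c * s) ^ (N + 1) :=
          Nat.mul_le_mul_left _ (Nat.pow_le_pow_left hEm _)
    _ < s ^ k := hmain
    _ ≤ B * Nat.choose (s + k) k := hchoose
  exact Nat.lt_of_mul_lt_mul_left hfinal

lemma chain_le {W : ℕ → Set (Pt F n)} {N : ℕ} (hmono : ∀ i < N, W i ⊂ W (i + 1)) :
    ∀ i j, i ≤ j → j ≤ N → W i ⊆ W j := by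
  intro i j hij hjN
  induction j with
  | zero =>
    have : i = 0 := by omega
    subst this; rfl
  | succ j IHj =>
    rcases Nat.lt_or_ge i (j + 1) with h | h
    · exact (IHj (by omega) (by omega)).trans (hmono j (by omega)).1
    · have : i = j + 1 := by omega
      subst this; rfl

lemma chain_lt {W : ℕ → Set (Pt F n)} {N : ℕ} (hmono : ∀ i < N, W i ⊂ W (i + 1)) :
    ∀ i j, i < j → j ≤ N → W i ⊂ W j := by
  intro i j hij hjN
  exact ssubset_of_ssubset_of_subset (hmono i (by omega))
    (chain_le hmono (i + 1) j (by omega) hjN)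

/-- strictly increasing chains of irreducible projective varieties in `ℙ^n`
have at most `n + 2` members -/
lemma chain_bound {N : ℕ} {W : ℕ → Set (Pt F n)}
    (hirr : ∀ i ≤ N, IsIrredProjVariety F n (W i))
    (hmono : ∀ i < N, W i ⊂ W (i + 1)) : N ≤ n + 1 := by
  by_contra hN
  push_neg at hN
  have hlink : ∀ i, i < n + 2 → ∃ (f : MvPolynomial (Fin (n + 1)) F) (e : ℕ),
      f.IsHomogeneous e ∧ (∀ x ∈ W i, eval x.rep f = 0) ∧
      ∃ x' ∈ W (i + 1), eval x'.rep f ≠ 0 :=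
    fun i hi => exists_sep (hirr i (by omega)).1 (hmono i (by omega))
  choose f e hfe hvan hnz using hlink
  set e' : ℕ → ℕ := fun i => if h : i < n + 2 then e i h else 0 with he'
  set E := (Finset.range (n + 2)).sup e' with hE
  have hEe : ∀ i (h : i < n + 2), e i h ≤ E := by
    intro i h
    have h1 : e i h = e' i := by simp [he', h]
    rw [h1]
    exact Finset.le_sup (Finset.mem_range.2 h)
  have main : ∀ i, i ≤ n + 2 → ∀ m, Nat.choose m i ≤ hdim (W i) (E * m) := by
    intro i
    induction i with
    | zero =>
      intro _ m
      simpa using one_le_hdim (hirr 0 (by omega)).2.1 (E * m)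
    | succ i IH =>
      intro hi m
      induction m with
      | zero => simp [Nat.choose_zero_succ]
      | succ m IHm =>
        have hiN : i < n + 2 := by omega
        have hWsub : W i ⊆ W (i + 1) := (hmono i (by omega)).1
        have heE := hEe i hiN
        have heEd : e i hiN ≤ E * (m + 1) := by
          have h1 : E ≤ E * (m + 1) := Nat.le_mul_of_pos_right _ (by omega)
          omega
        have hlink2 := hdim_link (hirr (i + 1) (by omega)) hWsub (hfe i hiN)
          (hvan i hiN) (hnz i hiN) heEd
        have hmono2 : hdim (W (i + 1)) (E * m) ≤ hdim (W (i + 1)) (E * (m + 1) - e i hiN) := by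
          apply hdim_mono' (hirr (i + 1) (by omega))
          have h1 : E * (m + 1) = E * m + E := by ring
          omega
        have hIHtop := IH (by omega) (m + 1)
        have hrec : Nat.choose (m + 1) (i + 1) = Nat.choose m i + Nat.choose m (i + 1) :=
          Nat.choose_succ_succ m i
        have hcm : Nat.choose m i ≤ Nat.choose (m + 1) i := Nat.choose_le_choose _ (by omega)
        omega
  obtain ⟨m, hm⟩ := arith_choose E n
  have h1 := main (n + 2) le_rfl m
  have h2 := hdim_le (W (n + 2)) (E * m)
  omega

/-- evaluating the restricted Chow polynomial -/
lemma eval_aeval_pow {r : ℕ} (t : Fin (r + 1) → F)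
    (Ch : MvPolynomial (Fin (r + 1) × Fin (n + 1)) F) :
    eval t (aeval (fun p : Fin (r + 1) × Fin (n + 1) =>
      (X p.1 : MvPolynomial (Fin (r + 1)) F) ^ (p.2 : ℕ)) Ch)
      = eval (fun p : Fin (r + 1) × Fin (n + 1) => t p.1 ^ (p.2 : ℕ)) Ch := by
  rw [MvPolynomial.aeval_def, MvPolynomial.eval₂_comp_left (eval t)]
  have h1 : (eval t).comp (algebraMap F (MvPolynomial (Fin (r + 1)) F)) = RingHom.id F := by
    ext a
    simp [MvPolynomial.algebraMap_eq]
  rw [h1]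
  have h2 : ((⇑(eval t)) ∘ fun p : Fin (r + 1) × Fin (n + 1) =>
      (X p.1 : MvPolynomial (Fin (r + 1)) F) ^ (p.2 : ℕ))
      = fun p : Fin (r + 1) × Fin (n + 1) => t p.1 ^ (p.2 : ℕ) := by
    funext p
    simp [Function.comp]
  rw [h2]
  rfl

end ChainBound

end ChowAux

/-- Restriction of the Chow form: let `V ⊆ ℙ^n` be a nonempty
equidimensional projective variety of dimension `r`, and let `Ch` be any
polynomial in the variables `u_{i,j}` (`0 ≤ i ≤ r`, `0 ≤ j ≤ n`) such that the
linear space cut out by the `r+1` linear forms with coefficient vectors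
`γ₀, …, γ_r` meets `V` iff `Ch(γ₀, …, γ_r) = 0`.  Then the substitution
`u_{i,j} ↦ v_i ^ j` sends `Ch` to a nonzero polynomial in `F[v₀, …, v_r]`. -/
theorem chow_form_restriction_nonzero (n r : ℕ)
    (V : Set (Projectivization F (Fin (n + 1) → F)))
    (hV : IsProjVariety F n V) (hne : V.Nonempty)
    (hequi : ∀ W, IsProjIrredComponent F n W V → projDim F n W = (r : ℤ))
    (Ch : MvPolynomial (Fin (r + 1) × Fin (n + 1)) F)
    (hCh : ∀ γ : Fin (r + 1) → Fin (n + 1) → F,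
      (V ∩ ⋂ i : Fin (r + 1),
        projZeroSet F n (∑ j : Fin (n + 1),
          MvPolynomial.C (γ i j) * MvPolynomial.X j)).Nonempty ↔
        MvPolynomial.eval (fun p => γ p.1 p.2) Ch = 0) :
    MvPolynomial.aeval (fun p : Fin (r + 1) × Fin (n + 1) =>
      (MvPolynomial.X p.1 : MvPolynomial (Fin (r + 1)) F) ^ (p.2 : ℕ)) Ch ≠ 0 := by
  intro hcon
  classical
  -- every "moment curve" linear space of codimension r+1 meets V
  have hstar : ∀ s : Fin (r + 1) → F, (V ∩ ⋂ i, ChowAux.Hs (n := n) (s i)).Nonempty := by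
    intro s
    have h0 : MvPolynomial.eval (fun p : Fin (r + 1) × Fin (n + 1) =>
        (fun i j => s i ^ (j : ℕ)) p.1 p.2) Ch = 0 := by
      have := ChowAux.eval_aeval_pow s Ch
      rw [hcon, map_zero] at this
      exact this.symm
    exact (hCh (fun i j => s i ^ (j : ℕ))).2 h0
  -- hence V contains a strictly increasing chain of r+2 irreducible subvarieties
  obtain ⟨W, hW, hWmono⟩ := ChowAux.chain_of_hits r V hV hstar
  -- put the top of the chain inside an irreducible component
  obtain ⟨C', hC', hWC'⟩ := ChowAux.exists_component hV (hW (r + 1) le_rfl).1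
    (hW (r + 1) le_rfl).2
  have hsub_le : ∀ i j, i ≤ j → j ≤ r + 1 → W i ⊆ W j := ChowAux.chain_le hWmono
  have hsub_lt : ∀ i j, i < j → j ≤ r + 1 → W i ⊂ W j := ChowAux.chain_lt hWmono
  -- the chain witnesses r+1 in the dimension set of C'
  have hmem : (r + 1) ∈ {m : ℕ | ∃ Wf : Fin (m + 1) →
      Set (Projectivization F (Fin (n + 1) → F)),
      (∀ i, IsIrredProjVariety F n (Wf i) ∧ Wf i ⊆ C') ∧
      ∀ i j, i < j → Wf i ⊂ Wf j} := by
    refine ⟨fun i => W i.val, fun i => ⟨(hW i.val (by omega)).1, ?_⟩, ?_⟩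
    · exact (hsub_le i.val (r + 1) (by omega) le_rfl).trans hWC'
    · intro i j hij
      exact hsub_lt i.val j.val hij (by omega)
  have hbdd : BddAbove {m : ℕ | ∃ Wf : Fin (m + 1) →
      Set (Projectivization F (Fin (n + 1) → F)),
      (∀ i, IsIrredProjVariety F n (Wf i) ∧ Wf i ⊆ C') ∧
      ∀ i j, i < j → Wf i ⊂ Wf j} := by
    refine ⟨n + 1, fun m hm => ?_⟩
    obtain ⟨Wf, h1, h2⟩ := hm
    refine ChowAux.chain_bound (W := fun i => Wf ⟨min i m, Nat.lt_succ_of_le (Nat.min_le_right i m)⟩) ?_ ?_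
    · intro i _
      exact (h1 _).1
    · intro i hi
      exact h2 _ _ (Fin.mk_lt_mk.2 (by omega))
  have hdimC := hequi C' hC'
  rw [projDim, if_pos hC'.1.2.1] at hdimC
  have heq : sSup {m : ℕ | ∃ Wf : Fin (m + 1) →
      Set (Projectivization F (Fin (n + 1) → F)),
      (∀ i, IsIrredProjVariety F n (Wf i) ∧ Wf i ⊆ C') ∧
      ∀ i j, i < j → Wf i ⊂ Wf j} = r := by exact_mod_cast hdimC
  have hge := le_csSup hbdd hmem
  rw [heq] at hge
  exact Nat.not_succ_le_self r hge
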